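/- arXiv:1608.07390 — 4 statements merged into one kernel-verified Lean document; each statement's English description precedes it below -/
import Mathlib

section
/- Every connected graph that is not complete has at least two distinct non-adjacent vertices neither of which is a cut vertex. -/
open SimpleGraph

/-- A walk `W` between `u` and `v` is a *tolled walk* if either `u = v` and `W` is trivial,
or `u` and `v` are adjacent and `W` is the single-edge walk, or `u ≠ v` are non-adjacent,
`W` has at least one interior vertex, `u` is adjacent exactly to the interior vertex
at position 1 and `v` exactly to the interior vertex at position `W.length - 1`. -/
def IsTolledWalk {V : Type*} (G : SimpleGraph V) {u v : V} (W : G.Walk u v) : Prop :=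
  (u = v ∧ W.length = 0) ∨
  (G.Adj u v ∧ W.support = [u, v]) ∨
  (¬ G.Adj u v ∧ u ≠ v ∧ 2 ≤ W.length ∧
    (∀ i, 0 < i → i < W.length → (G.Adj u (W.support.getD i u) ↔ i = 1)) ∧
    (∀ i, 0 < i → i < W.length → (G.Adj v (W.support.getD i u) ↔ i = W.length - 1)))

/-- The toll interval between `u` and `v`: vertices lying on some tolled walk. -/
def tollInterval {V : Type*} (G : SimpleGraph V) (u v : V) : Set V :=
  {x | ∃ W : G.Walk u v, IsTolledWalk G W ∧ x ∈ W.support}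

/-- A toll set: the toll intervals between its pairs cover the vertex set. -/
def IsTollSet {V : Type*} (G : SimpleGraph V) (S : Set V) : Prop :=
  ∀ x : V, ∃ u ∈ S, ∃ v ∈ S, x ∈ tollInterval G u v

/-- The toll number: minimum size of a toll set. -/
noncomputable def tollNumber {V : Type*} (G : SimpleGraph V) : ℕ :=
  sInf {n | ∃ S : Set V, S.Finite ∧ S.ncard = n ∧ IsTollSet G S}

/-- `v` is a cut vertex if deleting it disconnects the graph. -/
def IsCutVertex {V : Type*} (G : SimpleGraph V) (v : V) : Prop :=
  ¬ (G.induce {w | w ≠ v}).Preconnected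

/-- The extreme vertices of `G` with respect to toll convexity. -/
def extremeVertices {V : Type*} (G : SimpleGraph V) : Set V :=
  {s | ∀ x y : V, x ≠ s → y ≠ s → s ∉ tollInterval G x y}

/-- The lexicographic product of simple graphs. -/
def lexProd {V W : Type*} (G : SimpleGraph V) (H : SimpleGraph W) : SimpleGraph (V × W) where
  Adj a b := G.Adj a.1 b.1 ∨ (a.1 = b.1 ∧ H.Adj a.2 b.2)
  symm := by
    constructor
    rintro a b (h | ⟨h1, h2⟩)
    · exact Or.inl h.symm
    · exact Or.inr ⟨h1.symm, h2.symm⟩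
  loopless := by
    constructor
    rintro a (h | ⟨_, h⟩)
    · exact G.loopless.irrefl _ h
    · exact H.loopless.irrefl _ h

lemma reach_induce {V : Type*} {G : SimpleGraph V} {s : Set V} :
    ∀ {a b : V} (p : G.Walk a b), (∀ x ∈ p.support, x ∈ s) →
      ∀ (ha : a ∈ s) (hb : b ∈ s), (G.induce s).Reachable ⟨a, ha⟩ ⟨b, hb⟩ := by
  intro a b p
  induction p with
  | nil => intro _ ha hb; exact Reachable.refl _
  | @cons a c b h p ih =>
    intro hp ha hb
    have hc : c ∈ s := hp c (by simp [Walk.support_cons])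
    have hadj : (G.induce s).Adj ⟨a, ha⟩ ⟨c, hc⟩ := h
    exact hadj.reachable.trans (ih (fun x hx => hp x (by simp [Walk.support_cons, hx])) hc hb)

lemma not_cut_of_max {V : Type*} [Fintype V] (G : SimpleGraph V) (hconn : G.Connected)
    (u v : V) (hmax : ∀ a b : V, G.dist a b ≤ G.dist u v) (huv : u ≠ v) :
    ¬ IsCutVertex G v := by
  intro hcut
  classical
  unfold IsCutVertex at hcut
  rw [Preconnected] at hcut
  push_neg at hcut
  obtain ⟨a, b, hab⟩ := hcut
  set u' : {w : V | w ≠ v} := ⟨u, huv⟩ with hu'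
  have key : ∃ c : {w : V | w ≠ v}, ¬ (G.induce {w | w ≠ v}).Reachable u' c := by
    by_contra hc
    push_neg at hc
    exact hab ((hc a).symm.trans (hc b))
  obtain ⟨c, hc⟩ := key
  -- every walk from u to c.val passes through v
  have hpass : ∀ p : G.Walk u c.val, v ∈ p.support := by
    intro p
    by_contra hv
    exact hc (reach_induce p (fun x hx => fun (hxv : x = v) => hv (hxv ▸ hx)) huv c.2)
  obtain ⟨p, hp⟩ := hconn.exists_walk_length_eq_dist u c.val
  have hv := hpass p
  have hsplit := p.take_spec hv
  have hlen : p.length = (p.takeUntil v hv).length + (p.dropUntil v hv).length := by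
    conv_lhs => rw [← hsplit]
    exact Walk.length_append _ _
  have h1 : G.dist u v ≤ (p.takeUntil v hv).length := dist_le _
  have h2 : 0 < (p.dropUntil v hv).length := by
    rcases Nat.eq_zero_or_pos (p.dropUntil v hv).length with h | h
    case inr => exact h
    case inl =>
      exfalso
      have := Walk.eq_of_length_eq_zero h
      exact c.2 this.symm
  have : G.dist u v < G.dist u c.val := by omega
  exact absurd (hmax u c.val) (by omega)

theorem stmt0 {V : Type*} [Fintype V] (G : SimpleGraph V)
    (hconn : G.Connected) (hnc : G ≠ ⊤) :
    ∃ u v : V, u ≠ v ∧ ¬ G.Adj u v ∧ ¬ IsCutVertex G u ∧ ¬ IsCutVertex G v := by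
  -- get nonadjacent pair
  have hxy : ∃ x y : V, x ≠ y ∧ ¬ G.Adj x y := by
    by_contra h
    push_neg at h
    apply hnc
    ext a b
    simp only [top_adj]
    exact ⟨fun ha => ha.ne, fun ha => h a b ha⟩
  obtain ⟨x, y, hxy1, hxy2⟩ := hxy
  have hxy3 : 2 ≤ G.dist x y := by
    have h0 : 0 < G.dist x y := hconn.pos_dist_of_ne hxy1
    have h1 : G.dist x y ≠ 1 := fun h => hxy2 (dist_eq_one_iff_adj.mp h)
    omega
  have : Nonempty V := hconn.nonempty
  obtain ⟨⟨u, v⟩, hmax⟩ := Finite.exists_max (fun p : V × V => G.dist p.1 p.2)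
  have hmax' : ∀ a b : V, G.dist a b ≤ G.dist u v := fun a b => hmax (a, b)
  have h2 : 2 ≤ G.dist u v := le_trans hxy3 (hmax' x y)
  have huv : u ≠ v := by
    intro h; rw [h, dist_self] at h2; omega
  have hadj : ¬ G.Adj u v := fun h => by
    rw [← dist_eq_one_iff_adj] at h; omega
  refine ⟨u, v, huv, hadj, ?_, not_cut_of_max G hconn u v hmax' huv⟩
  have hmax'' : ∀ a b : V, G.dist a b ≤ G.dist v u := by
    intro a b
    have := hmax' a b
    rwa [show G.dist u v = G.dist v u from dist_comm] at this
  exact not_cut_of_max G hconn v u hmax'' huv.symm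
end

section
/- Let G and H be connected non-complete graphs, let x, y be non-adjacent vertices of G neither of which is a cut vertex, and let u, v be non-adjacent vertices of H neither of which is a cut vertex. Then the toll interval between (x,u) and (y,v) in G □ H is all of V(G □ H). -/
open SimpleGraph

namespace StmtAux


variable {V : Type*} {G : SimpleGraph V}

open SimpleGraph.Walk

lemma support_eq_dropLast_concat {a b : V} (M : G.Walk a b) :
    M.support = M.support.dropLast ++ [b] := by
  induction M with
  | nil => simp
  | cons h p ih =>
    rw [Walk.support_cons, List.dropLast_cons_of_ne_nil (Walk.support_ne_nil p)]
    rw [List.cons_append, ← ih]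

lemma mem_dropLast_or_end {a b : V} (M : G.Walk a b) {z : V} (hz : z ∈ M.support) :
    z ∈ M.support.dropLast ∨ z = b := by
  conv at hz => rw [support_eq_dropLast_concat M]
  rcases List.mem_append.1 hz with h | h
  · exact Or.inl h
  · simp at h; exact Or.inr h

lemma mem_tail_or_start {a b : V} (M : G.Walk a b) {z : V} (hz : z ∈ M.support) :
    z ∈ M.support.tail ∨ z = a := by
  have h := M.support_eq_cons
  rw [h] at hz
  rcases hz with _ | h'
  · exact Or.inr rfl
  · exact Or.inl ‹_›

lemma forall_tail_append {a b c : V} {M₁ : G.Walk a b} {M₂ : G.Walk b c} {C : V → Prop}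
    (h1 : ∀ z ∈ M₁.support.tail, C z) (h2 : ∀ z ∈ M₂.support.tail, C z) :
    ∀ z ∈ (M₁.append M₂).support.tail, C z := by
  intro z hz
  rcases (Walk.mem_tail_support_append_iff M₁ M₂).1 hz with h | h
  · exact h1 z h
  · exact h2 z h

lemma forall_dropLast_append {a b c : V} {M₁ : G.Walk a b} {M₂ : G.Walk b c} {C : V → Prop}
    (h1 : ∀ z ∈ M₁.support.dropLast, C z) (h2 : ∀ z ∈ M₂.support.dropLast, C z) :
    ∀ z ∈ (M₁.append M₂).support.dropLast, C z := by
  intro z hz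
  rw [Walk.support_append] at hz
  rcases List.eq_nil_or_concat M₂.support.tail with hnil | ⟨l', e, hl⟩
  · rw [hnil, List.append_nil] at hz
    exact h1 z hz
  · have hne : M₂.support.tail ≠ [] := by rw [hl]; simp
    rw [List.dropLast_append_of_ne_nil hne] at hz
    have hb : ∀ w ∈ M₂.support.tail.dropLast, C w := by
      intro w hw
      apply h2
      rw [M₂.support_eq_cons, List.dropLast_cons_of_ne_nil hne]
      exact List.mem_cons_of_mem _ hw
    have hbb : C b := by
      apply h2
      rw [M₂.support_eq_cons, List.dropLast_cons_of_ne_nil hne]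
      exact List.mem_cons_self
    rcases List.mem_append.1 hz with h' | h'
    · rcases mem_dropLast_or_end M₁ h' with h'' | rfl
      · exact h1 z h''
      · exact hbb
    · exact hb z h'

lemma forall_dropLast_of_tail_reverse {a b : V} {M : G.Walk a b} {C : V → Prop}
    (h : ∀ z ∈ M.reverse.support.tail, C z) :
    ∀ z ∈ M.support.dropLast, C z := by
  intro z hz
  apply h
  rw [Walk.support_reverse, List.tail_reverse]
  exact List.mem_reverse.2 hz

lemma forall_tail_of_dropLast_reverse {a b : V} {M : G.Walk a b} {C : V → Prop}
    (h : ∀ z ∈ M.reverse.support.dropLast, C z) :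
    ∀ z ∈ M.support.tail, C z := by
  intro z hz
  apply h
  rw [Walk.support_reverse]
  have := List.tail_reverse (l := M.support.reverse)
  rw [List.reverse_reverse] at this
  rw [this] at hz
  exact List.mem_reverse.1 hz



variable {V : Type*} {G : SimpleGraph V}

open SimpleGraph.Walk

lemma isTolled_construct {a b p q : V} (hab : ¬ G.Adj a b) (hne : a ≠ b)
    (h1 : G.Adj a p) {M : G.Walk p q} (h2 : G.Adj q b)
    (hA : ∀ z ∈ M.support.tail, ¬ G.Adj a z)
    (hB : ∀ z ∈ M.support.dropLast, ¬ G.Adj b z) :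
    IsTolledWalk G (Walk.cons h1 (M.concat h2)) := by
  have hlen : (Walk.cons h1 (M.concat h2)).length = M.length + 2 := by
    simp [Walk.length_concat]
  have hsup : (Walk.cons h1 (M.concat h2)).support = a :: (M.support ++ [b]) := by
    simp [Walk.support_concat, List.concat_eq_append]
  have hsl : M.support.length = M.length + 1 := M.length_support
  have hget : ∀ j, j < M.length + 1 →
      (Walk.cons h1 (M.concat h2)).support.getD (j+1) a = M.support.getD j a := by
    intro j hj
    rw [hsup]
    rw [List.getD_cons_succ]
    have hj' : j < M.support.length := by omega
    rw [List.getD_eq_getElem _ _ (by simp; omega), List.getD_eq_getElem _ _ hj']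
    rw [List.getElem_append_left hj']
  have hhead : M.support.getD 0 a = p := by
    rw [M.support_eq_cons]; rfl
  have h' := support_eq_dropLast_concat M
  have hdl : M.support.dropLast.length = M.length := by
    rw [List.length_dropLast, hsl]; omega
  have hlast : M.support.getD M.length a = q := by
    conv_lhs => rw [h']
    rw [List.getD_append_right _ _ _ _ (by omega)]
    simp [hdl]
  have htl : M.support.tail.length = M.length := by
    rw [M.support_eq_cons] at hsl
    simpa using hsl
  have hmemtail : ∀ j, 0 < j → j < M.length + 1 → M.support.getD j a ∈ M.support.tail := by
    intro j hj0 hj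
    obtain ⟨k, rfl⟩ : ∃ k, j = k + 1 := ⟨j - 1, by omega⟩
    have hstep : M.support.getD (k+1) a = M.support.tail.getD k a := by
      rw [M.support_eq_cons]; simp
    rw [hstep, List.getD_eq_getElem _ _ (by omega)]
    exact List.getElem_mem _
  have hmemdrop : ∀ j, j < M.length → M.support.getD j a ∈ M.support.dropLast := by
    intro j hj
    have hstep : M.support.getD j a = M.support.dropLast.getD j a := by
      conv_lhs => rw [h']
      rw [List.getD_append _ _ _ _ (by omega)]
    rw [hstep, List.getD_eq_getElem _ _ (by omega)]
    exact List.getElem_mem _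
  refine Or.inr (Or.inr ⟨hab, hne, by omega, ?_, ?_⟩)
  · intro i hi0 hil
    obtain ⟨j, rfl⟩ : ∃ j, i = j + 1 := ⟨i - 1, by omega⟩
    rw [hlen] at hil
    rw [hget j (by omega)]
    rcases Nat.eq_zero_or_pos j with rfl | hj
    · rw [hhead]; simpa using h1
    · have := hA _ (hmemtail j hj (by omega))
      simp only [this, false_iff]
      omega
  · intro i hi0 hil
    obtain ⟨j, rfl⟩ : ∃ j, i = j + 1 := ⟨i - 1, by omega⟩
    rw [hlen] at hil ⊢
    rw [hget j (by omega)]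
    rcases Nat.lt_or_ge j M.length with hj | hj
    · have hnadj := hB _ (hmemdrop j hj)
      simp only [hnadj, false_iff]
      omega
    · have hj' : j = M.length := by omega
      subst hj'
      rw [hlast]
      constructor
      · intro _; omega
      · intro _; exact h2.symm


open SimpleGraph.Walk

variable {V W : Type*} {G : SimpleGraph V} {H : SimpleGraph W}

lemma exists_nbr (hGc : G.Connected) {x y : V} (hxy : x ≠ y) : ∃ x₀, G.Adj x x₀ := by
  obtain ⟨Wk⟩ := hGc.preconnected x y
  cases Wk with
  | nil => exact absurd rfl hxy
  | cons h _ => exact ⟨_, h⟩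

lemma extract {a t : V} (Wk : G.Walk a t) (hat : a ≠ t) :
    ∃ c, G.Adj c t ∧ ∃ P : G.Walk a c,
      (∀ z ∈ P.support, z ≠ t) ∧ (∀ z ∈ P.support.dropLast, ¬ G.Adj z t) := by
  induction Wk with
  | nil => exact absurd rfl hat
  | @cons a a' t h W' ih =>
    by_cases hadj : G.Adj a t
    · exact ⟨a, hadj, Walk.nil, by simp [hat], by simp⟩
    · have ha' : a' ≠ t := by rintro rfl; exact hadj h
      obtain ⟨c, hc, P, h1, h2⟩ := ih ha'
      refine ⟨c, hc, Walk.cons h P, ?_, ?_⟩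
      · intro z hz
        rw [Walk.support_cons] at hz
        rcases hz with _ | hz
        · exact hat
        · exact h1 z ‹_›
      · intro z hz
        rw [Walk.support_cons, List.dropLast_cons_of_ne_nil (Walk.support_ne_nil P)] at hz
        rcases hz with _ | hz
        · exact hadj
        · exact h2 z ‹_›

lemma walk_avoid {s : V} (hs : ¬ IsCutVertex G s) {a b : V} (ha : a ≠ s) (hb : b ≠ s) :
    ∃ P : G.Walk a b, P.support.Nodup ∧ ∀ z ∈ P.support, z ≠ s := by
  classical
  have hpre : (G.induce {w | w ≠ s}).Preconnected := not_not.1 hs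
  obtain ⟨W'⟩ := hpre ⟨a, ha⟩ ⟨b, hb⟩
  let Wm : G.Walk a b := W'.map (SimpleGraph.Embedding.induce {w | w ≠ s}).toHom
  refine ⟨(Wm.toPath : G.Walk a b), (Wm.toPath).2.support_nodup, ?_⟩
  intro z hz
  have hz' : z ∈ Wm.support := Walk.support_toPath_subset Wm hz
  rw [show Wm.support = W'.support.map _ from SimpleGraph.Walk.support_map _ W'] at hz'
  obtain ⟨⟨w, hw⟩, _, rfl⟩ := List.mem_map.1 hz'
  exact hw

lemma exists_path (hGc : G.Connected) (a b : V) : ∃ P : G.Walk a b, P.support.Nodup := by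
  classical
  obtain ⟨Wk⟩ := hGc.preconnected a b
  exact ⟨Wk.toPath, (Wk.toPath).2.support_nodup⟩

lemma start_not_mem_tail {a b : V} (P : G.Walk a b) (h : P.support.Nodup) :
    a ∉ P.support.tail := by
  rw [P.support_eq_cons] at h
  exact (List.nodup_cons.1 h).1

lemma support_eq_dropLast_concat' {a b : V} (M : G.Walk a b) :
    M.support = M.support.dropLast ++ [b] := by
  induction M with
  | nil => simp
  | cons h p ih =>
    rw [Walk.support_cons, List.dropLast_cons_of_ne_nil (Walk.support_ne_nil p)]
    rw [List.cons_append, ← ih]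

lemma end_not_mem_dropLast {a b : V} (P : G.Walk a b) (h : P.support.Nodup) :
    b ∉ P.support.dropLast := by
  rw [support_eq_dropLast_concat' P] at h
  have := List.disjoint_of_nodup_append h
  intro hb
  exact this hb (by simp)

lemma support_boxProdLeft (b : W) {a₁ a₂ : V} (w : G.Walk a₁ a₂) :
    (Walk.boxProdLeft (H := H) b w).support = w.support.map (fun c => (c, b)) := by
  exact SimpleGraph.Walk.support_map (G.boxProdLeft H b).toHom w

lemma support_boxProdRight (a : V) {b₁ b₂ : W} (w : H.Walk b₁ b₂) :
    (Walk.boxProdRight G a w).support = w.support.map (fun c => (a, c)) := by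
  exact SimpleGraph.Walk.support_map (G.boxProdRight H a).toHom w



lemma mem_tail_reverse {a b : V} (M : G.Walk a b) {z : V} :
    z ∈ M.reverse.support.tail ↔ z ∈ M.support.dropLast := by
  rw [Walk.support_reverse, List.tail_reverse, List.mem_reverse]

lemma mem_dropLast_reverse {a b : V} (M : G.Walk a b) {z : V} :
    z ∈ M.reverse.support.dropLast ↔ z ∈ M.support.tail := by
  have h := mem_tail_reverse (M := M.reverse) (z := z)
  rw [Walk.reverse_reverse] at h
  exact h.symm

section Seg

variable {x y : V} {u v : W}

lemma segStartLeft (hGc : G.Connected) {a : V} (ha : a ≠ x) (u : W) :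
    ∃ c₁, G.Adj x c₁ ∧ ∃ S : (G □ H).Walk (c₁, u) (a, u),
      (∀ z ∈ S.support, z.2 = u) ∧ (∀ z ∈ S.support.tail, ¬ G.Adj z.1 x) := by
  obtain ⟨Wk⟩ := hGc.preconnected a x
  obtain ⟨c₁, hc₁, P, _, h2⟩ := extract Wk ha
  refine ⟨c₁, hc₁.symm, (Walk.boxProdLeft (H := H) u P).reverse, ?_, ?_⟩
  · intro z hz
    rw [Walk.support_reverse, List.mem_reverse, support_boxProdLeft] at hz
    obtain ⟨c, _, rfl⟩ := List.mem_map.1 hz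
    rfl
  · intro z hz
    rw [mem_tail_reverse, support_boxProdLeft, ← List.map_dropLast] at hz
    obtain ⟨c, hc, rfl⟩ := List.mem_map.1 hz
    exact h2 c hc

lemma segStartRight (hHc : H.Connected) {b : W} (hb : b ≠ u) (x : V) :
    ∃ c₁, H.Adj u c₁ ∧ ∃ S : (G □ H).Walk (x, c₁) (x, b),
      (∀ z ∈ S.support, z.1 = x) ∧ (∀ z ∈ S.support.tail, ¬ H.Adj z.2 u) := by
  obtain ⟨Wk⟩ := hHc.preconnected b u
  obtain ⟨c₁, hc₁, P, _, h2⟩ := extract Wk hb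
  refine ⟨c₁, hc₁.symm, (Walk.boxProdRight G x P).reverse, ?_, ?_⟩
  · intro z hz
    rw [Walk.support_reverse, List.mem_reverse, support_boxProdRight] at hz
    obtain ⟨c, _, rfl⟩ := List.mem_map.1 hz
    rfl
  · intro z hz
    rw [mem_tail_reverse, support_boxProdRight, ← List.map_dropLast] at hz
    obtain ⟨c, hc, rfl⟩ := List.mem_map.1 hz
    exact h2 c hc

lemma segEndLeft (hGc : G.Connected) {a : V} (ha : a ≠ y) (v : W) :
    ∃ c₁, G.Adj c₁ y ∧ ∃ S : (G □ H).Walk (a, v) (c₁, v),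
      (∀ z ∈ S.support, z.2 = v) ∧ (∀ z ∈ S.support.dropLast, ¬ G.Adj z.1 y) := by
  obtain ⟨Wk⟩ := hGc.preconnected a y
  obtain ⟨c₁, hc₁, P, _, h2⟩ := extract Wk ha
  refine ⟨c₁, hc₁, Walk.boxProdLeft (H := H) v P, ?_, ?_⟩
  · intro z hz
    rw [support_boxProdLeft] at hz
    obtain ⟨c, _, rfl⟩ := List.mem_map.1 hz
    rfl
  · intro z hz
    rw [support_boxProdLeft, ← List.map_dropLast] at hz
    obtain ⟨c, hc, rfl⟩ := List.mem_map.1 hz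
    exact h2 c hc

lemma segEndRight (hHc : H.Connected) {b : W} (hb : b ≠ v) (y : V) :
    ∃ c₁, H.Adj c₁ v ∧ ∃ S : (G □ H).Walk (y, b) (y, c₁),
      (∀ z ∈ S.support, z.1 = y) ∧ (∀ z ∈ S.support.dropLast, ¬ H.Adj z.2 v) := by
  obtain ⟨Wk⟩ := hHc.preconnected b v
  obtain ⟨c₁, hc₁, P, _, h2⟩ := extract Wk hb
  refine ⟨c₁, hc₁, Walk.boxProdRight G y P, ?_, ?_⟩
  · intro z hz
    rw [support_boxProdRight] at hz
    obtain ⟨c, _, rfl⟩ := List.mem_map.1 hz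
    rfl
  · intro z hz
    rw [support_boxProdRight, ← List.map_dropLast] at hz
    obtain ⟨c, hc, rfl⟩ := List.mem_map.1 hz
    exact h2 c hc

end Seg


lemma liftR_fst (a : V) {b₁ b₂ : W} (Q : H.Walk b₁ b₂) :
    ∀ z ∈ (Walk.boxProdRight G a Q).support, z.1 = a := by
  intro z hz
  rw [support_boxProdRight] at hz
  obtain ⟨c, _, rfl⟩ := List.mem_map.1 hz
  rfl

lemma liftR_snd (a : V) {b₁ b₂ : W} (Q : H.Walk b₁ b₂) :
    ∀ z ∈ (Walk.boxProdRight G a Q).support, z.2 ∈ Q.support := by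
  intro z hz
  rw [support_boxProdRight] at hz
  obtain ⟨c, hc, rfl⟩ := List.mem_map.1 hz
  exact hc

lemma liftR_tail (a : V) {b₁ b₂ : W} (Q : H.Walk b₁ b₂) :
    ∀ z ∈ (Walk.boxProdRight G a Q).support.tail, z.2 ∈ Q.support.tail := by
  intro z hz
  rw [support_boxProdRight, ← List.map_tail] at hz
  obtain ⟨c, hc, rfl⟩ := List.mem_map.1 hz
  exact hc

lemma liftR_dropLast (a : V) {b₁ b₂ : W} (Q : H.Walk b₁ b₂) :
    ∀ z ∈ (Walk.boxProdRight G a Q).support.dropLast, z.2 ∈ Q.support.dropLast := by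
  intro z hz
  rw [support_boxProdRight, ← List.map_dropLast] at hz
  obtain ⟨c, hc, rfl⟩ := List.mem_map.1 hz
  exact hc

lemma liftR_mem (a : V) {b₁ b₂ : W} {Q : H.Walk b₁ b₂} {c : W} (hc : c ∈ Q.support) :
    (a, c) ∈ (Walk.boxProdRight G a Q).support := by
  rw [support_boxProdRight]
  exact List.mem_map.2 ⟨c, hc, rfl⟩

section Pointwise

variable {x y : V} {u v : W}

lemma nA1 {z : V × W} (h2 : z.2 = u) (h1 : ¬ G.Adj x z.1) : ¬ (G □ H).Adj (x, u) z := by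
  obtain ⟨c, d⟩ := z
  rintro (⟨hg, he⟩ | ⟨hh, he⟩)
  · exact h1 hg
  · subst h2; exact hh.ne rfl

lemma nA2 {z : V × W} (h2 : z.2 ≠ u) (h1 : z.1 ≠ x) : ¬ (G □ H).Adj (x, u) z := by
  obtain ⟨c, d⟩ := z
  rintro (⟨hg, he⟩ | ⟨hh, he⟩)
  · exact h2 he.symm
  · exact h1 he.symm

lemma nA3 {z : V × W} (h1 : z.1 = x) (h2 : ¬ H.Adj u z.2) : ¬ (G □ H).Adj (x, u) z := by
  obtain ⟨c, d⟩ := z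
  rintro (⟨hg, he⟩ | ⟨hh, he⟩)
  · subst h1; exact hg.ne rfl
  · exact h2 hh

lemma nA0 (huvadj : ¬ H.Adj u v) (huv : u ≠ v) {z : V × W} (h : z.2 = v) :
    ¬ (G □ H).Adj (x, u) z := by
  obtain ⟨c, d⟩ := z
  subst h
  rintro (⟨hg, he⟩ | ⟨hh, he⟩)
  · exact huv he
  · exact huvadj hh

lemma nA0' (hxyadj : ¬ G.Adj x y) (hxy : x ≠ y) {z : V × W} (h : z.1 = y) :
    ¬ (G □ H).Adj (x, u) z := by
  obtain ⟨c, d⟩ := z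
  subst h
  rintro (⟨hg, he⟩ | ⟨hh, he⟩)
  · exact hxyadj hg
  · exact hxy he

lemma nB1 {z : V × W} (h2 : z.2 = v) (h1 : ¬ G.Adj y z.1) : ¬ (G □ H).Adj z (y, v) := by
  obtain ⟨c, d⟩ := z
  rintro (⟨hg, he⟩ | ⟨hh, he⟩)
  · exact h1 hg.symm
  · subst h2; exact hh.ne rfl

lemma nB2 {z : V × W} (h2 : z.2 ≠ v) (h1 : z.1 ≠ y) : ¬ (G □ H).Adj z (y, v) := by
  obtain ⟨c, d⟩ := z
  rintro (⟨hg, he⟩ | ⟨hh, he⟩)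
  · exact h2 he
  · exact h1 he

lemma nB3 {z : V × W} (h1 : z.1 = y) (h2 : ¬ H.Adj v z.2) : ¬ (G □ H).Adj z (y, v) := by
  obtain ⟨c, d⟩ := z
  rintro (⟨hg, he⟩ | ⟨hh, he⟩)
  · subst h1; exact hg.ne rfl
  · exact h2 hh.symm

lemma nB0 (hvuadj : ¬ H.Adj v u) (hvu : v ≠ u) {z : V × W} (h : z.2 = u) :
    ¬ (G □ H).Adj z (y, v) := by
  obtain ⟨c, d⟩ := z
  subst h
  rintro (⟨hg, he⟩ | ⟨hh, he⟩)
  · exact hvu he.symm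
  · exact hvuadj hh.symm

lemma nB0' (hyxadj : ¬ G.Adj y x) (hyx : y ≠ x) {z : V × W} (h : z.1 = x) :
    ¬ (G □ H).Adj z (y, v) := by
  obtain ⟨c, d⟩ := z
  subst h
  rintro (⟨hg, he⟩ | ⟨hh, he⟩)
  · exact hyxadj hg.symm
  · exact hyx he.symm

end Pointwise


lemma finisher {x y : V} {u v : W}
    (hAB : ¬ (G □ H).Adj (x, u) (y, v)) (hne : ((x, u) : V × W) ≠ (y, v))
    {p q : V × W} (h1 : (G □ H).Adj (x, u) p) (M : (G □ H).Walk p q)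
    (h2 : (G □ H).Adj q (y, v))
    (hA : ∀ z ∈ M.support.tail, ¬ (G □ H).Adj (x, u) z)
    (hB : ∀ z ∈ M.support.dropLast, ¬ (G □ H).Adj z (y, v))
    {z₀ : V × W} (hz : z₀ ∈ M.support ∨ z₀ = (x, u) ∨ z₀ = (y, v)) :
    z₀ ∈ tollInterval (G □ H) (x, u) (y, v) := by
  have hB' : ∀ z ∈ M.support.dropLast, ¬ (G □ H).Adj (y, v) z :=
    fun z hz h => hB z hz h.symm
  refine ⟨Walk.cons h1 (M.concat h2), isTolled_construct hAB hne h1 h2 hA hB', ?_⟩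
  rw [Walk.support_cons, Walk.support_concat]
  rcases hz with h | rfl | rfl
  · exact List.mem_cons_of_mem _ (List.mem_append.2 (Or.inl h))
  · exact List.mem_cons_self
  · exact List.mem_cons_of_mem _ (List.mem_append.2 (Or.inr (by simp)))

lemma main {x y : V} {u v : W}
    (hGc : G.Connected) (hHc : H.Connected)
    (hxy : x ≠ y) (hxyadj : ¬ G.Adj x y) (hx : ¬ IsCutVertex G x) (hy : ¬ IsCutVertex G y)
    (huv : u ≠ v) (huvadj : ¬ H.Adj u v) (hu : ¬ IsCutVertex H u) (hv : ¬ IsCutVertex H v)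
    (z₀ : V × W) : z₀ ∈ tollInterval (G □ H) (x, u) (y, v) := by
  have hvu : v ≠ u := huv.symm
  have hvuadj : ¬ H.Adj v u := fun h => huvadj h.symm
  have hyx : y ≠ x := hxy.symm
  have hyxadj : ¬ G.Adj y x := fun h => hxyadj h.symm
  have hAB : ¬ (G □ H).Adj (x, u) (y, v) := by
    rintro (⟨h, -⟩ | ⟨h, -⟩)
    · exact hxyadj h
    · exact huvadj h
  have hne : ((x, u) : V × W) ≠ (y, v) := fun h => hxy (congrArg Prod.fst h)
  obtain ⟨x₀, hx₀⟩ := exists_nbr hGc hxy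
  have hx₀x : x₀ ≠ x := hx₀.ne'
  have hx₀y : x₀ ≠ y := fun e => hxyadj (e ▸ hx₀)
  obtain ⟨y₀, hy₀⟩ := exists_nbr hGc hyx
  have hy₀y : y₀ ≠ y := hy₀.ne'
  have hy₀x : y₀ ≠ x := fun e => hyxadj (e ▸ hy₀)
  -- Case C1 : first coordinate differs from x and y
  have hC1 : ∀ (a : V) (b : W), a ≠ x → a ≠ y →
      ∀ w₀ : V × W, (w₀ = (a, b) ∨ w₀ = (x, u) ∨ w₀ = (y, v)) →
      w₀ ∈ tollInterval (G □ H) (x, u) (y, v) := by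
    intro a b hax hay w₀ hw₀
    obtain ⟨c₁, hc₁, S1, hS1u, hS1x⟩ := segStartLeft (H := H) hGc hax u
    obtain ⟨c₁', hc₁', S2, hS2v, hS2y⟩ := segEndLeft (H := H) (y := y) hGc hay v
    obtain ⟨S3, pb, h3a, h3tail, h3drop⟩ :
        ∃ S3 : (G □ H).Walk (a, u) (a, v), (a, b) ∈ S3.support ∧
          (∀ z ∈ S3.support, z.1 = a) ∧
          (∀ z ∈ S3.support.tail, z.2 ≠ u) ∧
          (∀ z ∈ S3.support.dropLast, z.2 ≠ v) := by
      by_cases hb : b = u ∨ b = v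
      · obtain ⟨Q, hQ⟩ := exists_path hHc u v
        refine ⟨Walk.boxProdRight G a Q, ?_, liftR_fst a Q, ?_, ?_⟩
        · rcases hb with rfl | rfl
          · exact liftR_mem a Q.start_mem_support
          · exact liftR_mem a Q.end_mem_support
        · intro z hz
          have h' := liftR_tail a Q z hz
          intro h''
          rw [h''] at h'
          exact start_not_mem_tail Q hQ h'
        · intro z hz
          have h' := liftR_dropLast a Q z hz
          intro h''
          rw [h''] at h'
          exact end_not_mem_dropLast Q hQ h'
      · push_neg at hb
        obtain ⟨Q₁, hQ₁n, hQ₁v⟩ := walk_avoid hv huv hb.2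
        obtain ⟨Q₂, hQ₂n, hQ₂u⟩ := walk_avoid hu hb.1 hvu
        refine ⟨(Walk.boxProdRight G a Q₁).append (Walk.boxProdRight G a Q₂), ?_, ?_, ?_, ?_⟩
        · exact (Walk.mem_support_append_iff _ _).2
            (Or.inl (liftR_mem a Q₁.end_mem_support))
        · intro z hz
          rcases (Walk.mem_support_append_iff _ _).1 hz with h | h
          · exact liftR_fst a Q₁ z h
          · exact liftR_fst a Q₂ z h
        · refine forall_tail_append ?_ ?_
          · intro z hz
            have h' := liftR_tail a Q₁ z hz
            intro h''
            rw [h''] at h'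
            exact start_not_mem_tail Q₁ hQ₁n h'
          · intro z hz
            have h' := liftR_snd a Q₂ z (List.tail_subset _ hz)
            intro h''
            exact hQ₂u _ h' (h'' ▸ rfl)
        · refine forall_dropLast_append ?_ ?_
          · intro z hz
            have h' := liftR_snd a Q₁ z (List.dropLast_subset _ hz)
            intro h''
            exact hQ₁v _ h' (h'' ▸ rfl)
          · intro z hz
            have h' := liftR_dropLast a Q₂ z hz
            intro h''
            rw [h''] at h'
            exact end_not_mem_dropLast Q₂ hQ₂n h'
    refine finisher hAB hne
      (p := (c₁, u)) (by exact Or.inl ⟨hc₁, rfl⟩)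
      (S1.append (S3.append S2))
      (q := (c₁', v)) (by exact Or.inl ⟨hc₁', rfl⟩)
      ?_ ?_ ?_
    · refine forall_tail_append ?_ (forall_tail_append ?_ ?_)
      · intro z hz
        exact nA1 (hS1u z (List.tail_subset _ hz)) (fun h => hS1x z hz h.symm)
      · intro z hz
        exact nA2 (h3tail z hz) (by rw [h3a z (List.tail_subset _ hz)]; exact hax)
      · intro z hz
        exact nA0 huvadj huv (hS2v z (List.tail_subset _ hz))
    · refine forall_dropLast_append ?_ (forall_dropLast_append ?_ ?_)
      · intro z hz
        exact nB0 hvuadj hvu (hS1u z (List.dropLast_subset _ hz))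
      · intro z hz
        exact nB2 (h3drop z hz) (by rw [h3a z (List.dropLast_subset _ hz)]; exact hay)
      · intro z hz
        exact nB1 (hS2v z (List.dropLast_subset _ hz)) (fun h => hS2y z hz h.symm)
    · rcases hw₀ with rfl | h
      · exact Or.inl ((Walk.mem_support_append_iff _ _).2
          (Or.inr ((Walk.mem_support_append_iff _ _).2 (Or.inl pb))))
      · exact Or.inr h
  -- Case C2 : z₀ = (x, b) with b ≠ u
  have hC2 : ∀ b : W, b ≠ u → (x, b) ∈ tollInterval (G □ H) (x, u) (y, v) := by
    intro b hbu
    obtain ⟨c₁, hc₁, S1, hS1col, hS1tail⟩ := segStartRight (G := G) hHc hbu x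
    have hadjE : (G □ H).Adj (x, b) (x₀, b) := Or.inl ⟨hx₀, rfl⟩
    let E1 : (G □ H).Walk (x, b) (x₀, b) := Walk.cons hadjE Walk.nil
    obtain ⟨Q, hQn, hQu⟩ := walk_avoid hu hbu hvu
    let S3 : (G □ H).Walk (x₀, b) (x₀, v) := Walk.boxProdRight G x₀ Q
    obtain ⟨c₁', hc₁', S2, hS2v, hS2y⟩ := segEndLeft (H := H) (y := y) hGc hx₀y v
    have hE1sup : E1.support = [(x, b), (x₀, b)] := rfl
    refine finisher hAB hne
      (p := (x, c₁)) (by exact Or.inr ⟨hc₁, rfl⟩)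
      (S1.append (E1.append (S3.append S2)))
      (q := (c₁', v)) (by exact Or.inl ⟨hc₁', rfl⟩)
      ?_ ?_ ?_
    · refine forall_tail_append ?_ (forall_tail_append ?_ (forall_tail_append ?_ ?_))
      · intro z hz
        exact nA3 (hS1col z (List.tail_subset _ hz)) (fun h => hS1tail z hz h.symm)
      · intro z hz
        rw [hE1sup] at hz
        simp only [List.tail_cons, List.mem_singleton] at hz
        subst hz
        exact nA2 hbu hx₀x
      · intro z hz
        have h' := liftR_snd x₀ Q z (List.tail_subset _ hz)
        exact nA2 (fun h'' => hQu _ h' (h'' ▸ rfl))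
          (by rw [liftR_fst x₀ Q z (List.tail_subset _ hz)]; exact hx₀x)
      · intro z hz
        exact nA0 huvadj huv (hS2v z (List.tail_subset _ hz))
    · refine forall_dropLast_append ?_ (forall_dropLast_append ?_ (forall_dropLast_append ?_ ?_))
      · intro z hz
        exact nB0' hyxadj hyx (hS1col z (List.dropLast_subset _ hz))
      · intro z hz
        rw [hE1sup] at hz
        simp only [List.dropLast_cons₂, List.dropLast_singleton, List.mem_singleton] at hz
        subst hz
        exact nB0' hyxadj hyx rfl
      · intro z hz
        have h' := liftR_dropLast x₀ Q z hz
        refine nB2 ?_ (by rw [liftR_fst x₀ Q z (List.dropLast_subset _ hz)]; exact hx₀y)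
        intro h''
        rw [h''] at h'
        exact end_not_mem_dropLast Q hQn h'
      · intro z hz
        exact nB1 (hS2v z (List.dropLast_subset _ hz)) (fun h => hS2y z hz h.symm)
    · exact Or.inl ((Walk.mem_support_append_iff _ _).2 (Or.inl S1.end_mem_support))
  -- Case C3 : z₀ = (y, b) with b ≠ v
  have hC3 : ∀ b : W, b ≠ v → (y, b) ∈ tollInterval (G □ H) (x, u) (y, v) := by
    intro b hbv
    obtain ⟨c₁, hc₁, S1, hS1u, hS1x⟩ := segStartLeft (H := H) hGc hy₀x u
    obtain ⟨Q, hQn, hQv⟩ := walk_avoid hv huv hbv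
    let S3 : (G □ H).Walk (y₀, u) (y₀, b) := Walk.boxProdRight G y₀ Q
    have hadjE : (G □ H).Adj (y₀, b) (y, b) := Or.inl ⟨hy₀.symm, rfl⟩
    let E1 : (G □ H).Walk (y₀, b) (y, b) := Walk.cons hadjE Walk.nil
    obtain ⟨c₁', hc₁', S2, hS2col, hS2tail⟩ := segEndRight (G := G) hHc hbv y
    have hE1sup : E1.support = [(y₀, b), (y, b)] := rfl
    refine finisher hAB hne
      (p := (c₁, u)) (by exact Or.inl ⟨hc₁, rfl⟩)
      (S1.append (S3.append (E1.append S2)))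
      (q := (y, c₁')) (by exact Or.inr ⟨hc₁', rfl⟩)
      ?_ ?_ ?_
    · refine forall_tail_append ?_ (forall_tail_append ?_ (forall_tail_append ?_ ?_))
      · intro z hz
        exact nA1 (hS1u z (List.tail_subset _ hz)) (fun h => hS1x z hz h.symm)
      · intro z hz
        have h' := liftR_tail y₀ Q z hz
        refine nA2 ?_ (by rw [liftR_fst y₀ Q z (List.tail_subset _ hz)]; exact hy₀x)
        intro h''
        rw [h''] at h'
        exact start_not_mem_tail Q hQn h'
      · intro z hz
        rw [hE1sup] at hz
        simp only [List.tail_cons, List.mem_singleton] at hz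
        subst hz
        exact nA0' hxyadj hxy rfl
      · intro z hz
        exact nA0' hxyadj hxy (hS2col z (List.tail_subset _ hz))
    · refine forall_dropLast_append ?_ (forall_dropLast_append ?_ (forall_dropLast_append ?_ ?_))
      · intro z hz
        exact nB0 hvuadj hvu (hS1u z (List.dropLast_subset _ hz))
      · intro z hz
        have h' := liftR_snd y₀ Q z (List.dropLast_subset _ hz)
        exact nB2 (fun h'' => hQv _ h' (h'' ▸ rfl))
          (by rw [liftR_fst y₀ Q z (List.dropLast_subset _ hz)]; exact hy₀y)
      · intro z hz
        rw [hE1sup] at hz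
        simp only [List.dropLast_cons₂, List.dropLast_singleton, List.mem_singleton] at hz
        subst hz
        exact nB2 hbv hy₀y
      · intro z hz
        exact nB3 (hS2col z (List.dropLast_subset _ hz)) (fun h => hS2tail z hz h.symm)
    · exact Or.inl ((Walk.mem_support_append_iff _ _).2 (Or.inr
        ((Walk.mem_support_append_iff _ _).2 (Or.inr
          ((Walk.mem_support_append_iff _ _).2 (Or.inl E1.end_mem_support))))))
  -- dispatch
  obtain ⟨a, b⟩ := z₀
  by_cases hax : a = x
  · subst hax
    by_cases hbu : b = u
    · rw [hbu]
      exact hC1 x₀ u hx₀x hx₀y _ (Or.inr (Or.inl rfl))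
    · exact hC2 b hbu
  · by_cases hay : a = y
    · subst hay
      by_cases hbv : b = v
      · rw [hbv]
        exact hC1 x₀ u hx₀x hx₀y _ (Or.inr (Or.inr rfl))
      · exact hC3 b hbv
    · exact hC1 a b hax hay _ (Or.inl rfl)


end StmtAux

theorem stmt5 {V W : Type*} [Fintype V] [Fintype W]
    (G : SimpleGraph V) (H : SimpleGraph W)
    (hGc : G.Connected) (hHc : H.Connected) (hG : G ≠ ⊤) (hH : H ≠ ⊤)
    (x y : V) (u v : W)
    (hxy : x ≠ y) (hxyadj : ¬ G.Adj x y) (hx : ¬ IsCutVertex G x) (hy : ¬ IsCutVertex G y)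
    (huv : u ≠ v) (huvadj : ¬ H.Adj u v) (hu : ¬ IsCutVertex H u) (hv : ¬ IsCutVertex H v) :
    tollInterval (G □ H) (x, u) (y, v) = Set.univ := by
  apply Set.eq_univ_of_forall
  intro z₀
  exact StmtAux.main hGc hHc hxy hxyadj hx hy huv huvadj hu hv z₀
end

section
/- If G is a non-trivial extreme complete graph (i.e., |Ext(G)| = tn(G)), then tn(G ∘ K_n) = n · tn(G). -/
open SimpleGraph

section AuxLemmas

variable {V : Type*}

private lemma getElem_idx_congr {α : Type*} {l : List α} {i j : ℕ} (h : i = j)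
    (hi : i < l.length) : l[i] = l[j]'(h ▸ hi) := by subst h; rfl

private lemma tail_sublist_cons {α : Type*} {l m : List α} {a : α} (h : List.Sublist l (a :: m)) :
    List.Sublist l.tail m := by
  cases h with
  | cons _ h' => exact (List.tail_sublist _).trans h'
  | cons_cons _ h' => exact h'

lemma walk_support_getElem {G : SimpleGraph V} {u v : V} (W : G.Walk u v) :
    ∀ (i : ℕ) (h : i < W.support.length), W.support[i] = W.getVert i := by
  induction W with
  | nil =>
    intro i h
    simp only [Walk.support_nil, List.length_cons, List.length_nil] at h
    have : i = 0 := by omega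
    subst this
    simp [Walk.getVert_zero]
  | cons h' W ih =>
    intro i h
    cases i with
    | zero => simp [Walk.support_cons, Walk.getVert_zero]
    | succ k =>
      have hk : k < W.support.length := by
        rw [Walk.support_cons, List.length_cons] at h; omega
      have := ih k hk
      simpa [Walk.getVert_cons_succ] using this

lemma walk_adj_support_one {G : SimpleGraph V} {u v : V} (W : G.Walk u v) (h : 1 ≤ W.length) :
    G.Adj u (W.support.getD 1 u) := by
  rw [List.getD_eq_getElem _ _ (by rw [Walk.length_support]; omega), walk_support_getElem]
  have h2 := W.adj_getVert_succ (i := 0) (by omega)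
  rwa [Walk.getVert_zero] at h2

lemma walk_adj_support_pen {G : SimpleGraph V} {u v d : V} (W : G.Walk u v) (h : 1 ≤ W.length) :
    G.Adj v (W.support.getD (W.length - 1) d) := by
  rw [List.getD_eq_getElem _ _ (by rw [Walk.length_support]; omega), walk_support_getElem]
  have h2 := W.adj_getVert_succ (i := W.length - 1) (by omega)
  rw [show W.length - 1 + 1 = W.length by omega, Walk.getVert_length] at h2
  exact h2.symm

lemma normF {G : SimpleGraph V} {u v : V} (W : G.Walk u v)
    (h : ∀ i, 0 < i → i < W.length → (G.Adj u (W.support.getD i u) ↔ i = 1)) :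
    ∀ z ∈ (W.support.drop 2).dropLast, ¬ G.Adj u z := by
  intro z hz hadj
  obtain ⟨k, hk, hzk⟩ := List.mem_iff_getElem.mp hz
  have hS : W.support.length = W.length + 1 := Walk.length_support W
  have hk' : k < W.length - 2 := by
    simp only [List.length_dropLast, List.length_drop, hS] at hk; omega
  have h1 : z = W.support[2+k]'(by omega) := by
    rw [← hzk, List.getElem_dropLast, List.getElem_drop]
  have h2 := h (2+k) (by omega) (by omega)
  rw [List.getD_eq_getElem _ _ (by omega), ← h1] at h2
  have := h2.mp hadj
  omega

lemma normFrev {G : SimpleGraph V} {u v : V} (W : G.Walk u v)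
    (h : ∀ i, 0 < i → i < W.length → (G.Adj v (W.support.getD i u) ↔ i = W.length - 1)) :
    ∀ z ∈ (W.support.reverse.drop 2).dropLast, ¬ G.Adj v z := by
  intro z hz hadj
  obtain ⟨k, hk, hzk⟩ := List.mem_iff_getElem.mp hz
  have hS : W.support.length = W.length + 1 := Walk.length_support W
  have hk' : k < W.length - 2 := by
    simp only [List.length_dropLast, List.length_drop, List.length_reverse, hS] at hk; omega
  have h1 : z = W.support[W.length - 2 - k]'(by omega) := by
    rw [← hzk, List.getElem_dropLast, List.getElem_drop, List.getElem_reverse]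
    exact getElem_idx_congr (by omega) (by omega)
  have h2 := h (W.length - 2 - k) (by omega) (by omega)
  rw [List.getD_eq_getElem _ _ (by omega), ← h1] at h2
  have := h2.mp hadj
  omega

lemma normB {G : SimpleGraph V} {u v : V} (W : G.Walk u v) (hlen : 2 ≤ W.length)
    (h : ∀ z ∈ W.support.drop 2, ¬ G.Adj u z) :
    ∀ i, 0 < i → i < W.length → (G.Adj u (W.support.getD i u) ↔ i = 1) := by
  intro i h0 hi
  have hS : W.support.length = W.length + 1 := Walk.length_support W
  rcases eq_or_ne i 1 with rfl | hne
  · exact iff_of_true (walk_adj_support_one W (by omega)) rfl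
  · refine iff_of_false ?_ hne
    have hmem : W.support.getD i u ∈ W.support.drop 2 := by
      rw [List.getD_eq_getElem _ _ (by omega), List.mem_iff_getElem]
      refine ⟨i - 2, by simp only [List.length_drop, hS]; omega, ?_⟩
      rw [List.getElem_drop]
      exact getElem_idx_congr (by omega) (by omega)
    exact h _ hmem

lemma normBrev {G : SimpleGraph V} {u v : V} (W : G.Walk u v) (hlen : 2 ≤ W.length)
    (h : ∀ z ∈ W.support.reverse.drop 2, ¬ G.Adj v z) :
    ∀ i, 0 < i → i < W.length → (G.Adj v (W.support.getD i u) ↔ i = W.length - 1) := by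
  intro i h0 hi
  have hS : W.support.length = W.length + 1 := Walk.length_support W
  rcases eq_or_ne i (W.length - 1) with rfl | hne
  · exact iff_of_true (walk_adj_support_pen W (by omega)) rfl
  · refine iff_of_false ?_ hne
    have hmem : W.support.getD i u ∈ W.support.reverse.drop 2 := by
      rw [List.getD_eq_getElem _ _ (by omega), List.mem_iff_getElem]
      refine ⟨W.length - 2 - i, by simp only [List.length_drop, List.length_reverse, hS]; omega, ?_⟩
      rw [List.getElem_drop, List.getElem_reverse]
      exact getElem_idx_congr (by simp only [hS]; omega) (by omega)
    exact h _ hmem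

lemma len2 {G : SimpleGraph V} {a b : V} (hne : a ≠ b) (hnadj : ¬ G.Adj a b) (Q : G.Walk a b) :
    2 ≤ Q.length := by
  cases Q with
  | nil => exact absurd rfl hne
  | cons h Q₂ =>
    cases Q₂ with
    | nil => exact absurd h hnadj
    | cons h₂ Q₃ => simp only [Walk.length_cons]; omega

lemma walk_succ {G : SimpleGraph V} {s t : V} (W : G.Walk s t) :
    ∀ p ∈ W.support, p ≠ t → ∃ q ∈ W.support, G.Adj p q := by
  induction W with
  | nil =>
    intro p hp hne
    simp only [Walk.support_nil, List.mem_singleton] at hp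
    exact absurd hp hne
  | @cons s r t h W ih =>
    intro p hp hne
    rw [Walk.support_cons, List.mem_cons] at hp
    rcases hp with rfl | hp
    · exact ⟨r, by simp [Walk.support_cons, Walk.start_mem_support], h⟩
    · obtain ⟨q, hq, hadj⟩ := ih p hp hne
      exact ⟨q, by simp [Walk.support_cons, hq], hadj⟩

lemma getLast_support {G : SimpleGraph V} {s t : V} (W : G.Walk s t) :
    W.support.getLast (W.support_ne_nil) = t := by
  induction W with
  | nil => rfl
  | cons h W ih =>
    exact (List.getLast_cons (Walk.support_ne_nil W)).trans ih

lemma mem_support_split {G : SimpleGraph V} {s t : V} (W : G.Walk s t) {p : V}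
    (hp : p ∈ W.support) : p ∈ W.support.dropLast ∨ p = t := by
  have h2 := List.dropLast_append_getLast (W.support_ne_nil)
  rw [getLast_support] at h2
  rw [← h2, List.mem_append, List.mem_singleton] at hp
  exact hp

end AuxLemmas

section Proj

variable {V W' : Type*} {G : SimpleGraph V} {H : SimpleGraph W'}

lemma lexProd_fst_eq {p r : V × W'} (h : (lexProd G H).Adj p r) (hA : ¬ G.Adj p.1 r.1) :
    r.1 = p.1 := by
  rcases h with h' | ⟨h', _⟩
  · exact absurd h' hA
  · exact h'.symm

open Classical in
noncomputable def projW : {p q : V × W'} → (lexProd G H).Walk p q → G.Walk p.1 q.1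
  | _, _, .nil => .nil
  | _, _, @Walk.cons _ _ p r q h W =>
    if hA : G.Adj p.1 r.1 then .cons hA (projW W)
    else (projW W).copy (lexProd_fst_eq h hA) rfl

lemma projW_nil {p : V × W'} : projW (.nil : (lexProd G H).Walk p p) = .nil := rfl

open Classical in
lemma projW_cons {p r q : V × W'} (h : (lexProd G H).Adj p r) (W : (lexProd G H).Walk r q) :
    projW (.cons h W) = if hA : G.Adj p.1 r.1 then .cons hA (projW W)
      else (projW W).copy (lexProd_fst_eq h hA) rfl := rfl

lemma projW_support_sublist : ∀ {p q : V × W'} (W : (lexProd G H).Walk p q),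
    List.Sublist (projW W).support (W.support.map Prod.fst) := by
  intro p q W
  induction W with
  | nil => simp [projW_nil]
  | @cons p r q h W ih =>
    rw [projW_cons]
    split_ifs with hA
    · simp only [Walk.support_cons, List.map_cons]
      exact ih.cons₂ p.1
    · simp only [Walk.support_copy, Walk.support_cons, List.map_cons]
      exact ih.cons p.1

lemma fst_mem_projW_support : ∀ {p q : V × W'} (W : (lexProd G H).Walk p q) (z : V × W'),
    z ∈ W.support → z.1 ∈ (projW W).support := by
  intro p q W
  induction W with
  | nil =>
    intro z hz
    simp only [Walk.support_nil, List.mem_singleton] at hz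
    subst hz
    simp [projW_nil]
  | @cons p r q h W ih =>
    intro z hz
    rw [Walk.support_cons, List.mem_cons] at hz
    rw [projW_cons]
    split_ifs with hA
    · rw [Walk.support_cons, List.mem_cons]
      rcases hz with rfl | hz
      · exact Or.inl rfl
      · exact Or.inr (ih z hz)
    · rw [Walk.support_copy]
      rcases hz with rfl | hz
      · rw [← lexProd_fst_eq h hA]
        exact Walk.start_mem_support _
      · exact ih z hz

private lemma copy_append {a a' b c : V} (W : G.Walk a b) (h : a = a') (W2 : G.Walk b c) :
    (W.copy h rfl).append W2 = (W.append W2).copy h rfl := by subst h; simp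

private lemma append_nil_copy {a b c : V} (W : G.Walk a b) (e : c = b) :
    W.append ((Walk.nil : G.Walk c c).copy e rfl) = W.copy rfl e.symm := by
  subst e; simp [Walk.append_nil]

lemma projW_append : ∀ {p q r : V × W'} (W1 : (lexProd G H).Walk p q)
    (W2 : (lexProd G H).Walk q r),
    projW (W1.append W2) = (projW W1).append (projW W2) := by
  intro p q r W1 W2
  induction W1 with
  | nil => rfl
  | @cons p s q h W ih =>
    rw [Walk.cons_append, projW_cons, projW_cons]
    split_ifs with hA
    · rw [ih]
      rfl
    · rw [ih, copy_append]

lemma projW_reverse : ∀ {p q : V × W'} (W : (lexProd G H).Walk p q),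
    projW W.reverse = (projW W).reverse := by
  intro p q W
  induction W with
  | nil => rfl
  | @cons p r q h W ih =>
    rw [Walk.reverse_cons, projW_append, ih, projW_cons, projW_cons]
    by_cases hA : G.Adj p.1 r.1
    · rw [dif_pos hA, dif_pos hA.symm, Walk.reverse_cons]
      rfl
    · rw [dif_neg hA, dif_neg (fun h' => hA h'.symm), projW_nil, Walk.reverse_copy,
        append_nil_copy]

lemma core {u' v' : V × W'} (W : (lexProd G H).Walk u' v') (hlen : 2 ≤ W.length)
    (hnadj : ¬ (lexProd G H).Adj u' v')
    (hu : ∀ z ∈ (W.support.drop 2).dropLast, ¬ (lexProd G H).Adj u' z) :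
    ∀ z ∈ (projW W).support.drop 2, ¬ G.Adj u'.1 z := by
  intro z hz
  cases W with
  | nil => simp at hlen
  | @cons _ p₁ _ h₁ W₂ =>
    cases W₂ with
    | nil => simp at hlen
    | @cons _ p₂ _ h₂ W₃ =>
      have hnadj1 : ¬ G.Adj u'.1 v'.1 := fun a => hnadj (Or.inl a)
      simp only [Walk.support_cons, List.drop_succ_cons, List.drop_zero] at hu
      have hz' : z ∈ ((projW (Walk.cons h₂ W₃)).support).tail := by
        rw [projW_cons] at hz
        split_ifs at hz with hA
        · rw [Walk.support_cons] at hz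
          have hz2 : z ∈ List.drop 1 (projW (Walk.cons h₂ W₃)).support := hz
          rwa [List.drop_one] at hz2
        · rw [Walk.support_copy] at hz
          have e : List.drop 2 (projW (Walk.cons h₂ W₃)).support
              = List.drop 1 ((projW (Walk.cons h₂ W₃)).support.tail) := by
            rw [← List.drop_one, List.drop_drop]
          rw [e] at hz
          exact List.drop_subset _ _ hz
      have hsub : List.Sublist ((projW (Walk.cons h₂ W₃)).support).tail
          (W₃.support.map Prod.fst) := by
        have h1 := projW_support_sublist (Walk.cons h₂ W₃)
        rw [Walk.support_cons, List.map_cons] at h1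
        exact tail_sublist_cons h1
      obtain ⟨m, hm, rfl⟩ := List.mem_map.mp (hsub.subset hz')
      rcases mem_support_split W₃ hm with hmem | rfl
      · exact fun a => hu m hmem (Or.inl a)
      · exact hnadj1

end Proj

section TopFiber

variable {V : Type*} {n : ℕ} {G : SimpleGraph V}

lemma fiber {u' v' : V × Fin n} (W : (lexProd G (⊤ : SimpleGraph (Fin n))).Walk u' v')
    (hlen : 2 ≤ W.length)
    (hnadj : ¬ (lexProd G (⊤ : SimpleGraph (Fin n))).Adj u' v') (hne : u' ≠ v')
    (hu : ∀ z ∈ (W.support.drop 2).dropLast, ¬ (lexProd G (⊤ : SimpleGraph (Fin n))).Adj u' z) :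
    ∀ p ∈ W.support, p.1 = u'.1 → p = u' := by
  have hxy : u'.1 ≠ v'.1 := by
    intro e
    rcases eq_or_ne u'.2 v'.2 with e2 | e2
    · exact hne (Prod.ext e e2)
    · exact hnadj (Or.inr ⟨e, by rwa [top_adj]⟩)
  have hnxy : ¬ G.Adj u'.1 v'.1 := fun a => hnadj (Or.inl a)
  cases W with
  | nil => simp at hlen
  | @cons _ p₁ _ h₁ W₂ =>
    cases W₂ with
    | nil => simp at hlen
    | @cons _ p₂ _ h₂ W₃ =>
      simp only [Walk.support_cons, List.drop_succ_cons, List.drop_zero] at hu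
      have keyM : ∀ m ∈ W₃.support, m ≠ v' → ¬ (lexProd G (⊤ : SimpleGraph (Fin n))).Adj u' m := by
        intro m hm hmv
        rcases mem_support_split W₃ hm with hmem | hlast
        · exact hu m hmem
        · exact absurd hlast hmv
      have keyM2 : ∀ m ∈ W₃.support, m ≠ v' → m.1 = u'.1 → m = u' := by
        intro m hm hmv he
        by_contra hmu
        have h2 : u'.2 ≠ m.2 := by
          intro e2
          exact hmu (Prod.ext he (e2.symm))
        exact keyM m hm hmv (Or.inr ⟨he.symm, by rwa [top_adj]⟩)
      have huNot : u' ∉ W₃.support := by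
        intro hmem
        obtain ⟨q, hq, hadj⟩ := walk_succ W₃ u' hmem hne
        rcases mem_support_split W₃ hq with hmem2 | rfl
        · exact hu q hmem2 hadj
        · exact hnadj hadj
      intro p hp hpe
      rw [Walk.support_cons, Walk.support_cons, List.mem_cons, List.mem_cons] at hp
      rcases hp with rfl | rfl | hp
      · rfl
      · exfalso
        have hp₂ : p₂ ∈ W₃.support := Walk.start_mem_support W₃
        by_cases hpv : p₂ = v'
        · subst hpv
          rcases h₂ with hA | ⟨he2, _⟩
          · rw [hpe] at hA
            exact hnxy hA
          · rw [hpe] at he2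
            exact hxy he2
        · rcases h₂ with hA | ⟨he2, _⟩
          · rw [hpe] at hA
            exact keyM p₂ hp₂ hpv (Or.inl hA)
          · have hp₂1 : p₂.1 = u'.1 := by rw [← he2, hpe]
            have he3 := keyM2 p₂ hp₂ hpv hp₂1
            subst he3
            exact huNot hp₂
      · refine keyM2 p hp ?_ hpe
        intro e
        rw [e] at hpe
        exact hxy hpe.symm

lemma extreme_lift {g : V} (hg : g ∈ extremeVertices G) (h : Fin n) :
    (g, h) ∈ extremeVertices (lexProd G (⊤ : SimpleGraph (Fin n))) := by
  intro x' y' hx hy hmem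
  obtain ⟨W, hW, hgW⟩ := hmem
  rcases hW with ⟨heq, hlen0⟩ | ⟨hadj, hsup⟩ | ⟨hnadj, hne, hlen, hpu, hpv⟩
  · have hsupp : W.support = [x'] := by
      cases W with
      | nil => rfl
      | cons _ _ => simp [Walk.length_cons] at hlen0
    rw [hsupp, List.mem_singleton] at hgW
    exact hx hgW.symm
  · rw [hsup] at hgW
    simp only [List.mem_cons, List.not_mem_nil, or_false, List.mem_singleton] at hgW
    rcases hgW with h1 | h1
    · exact hx h1.symm
    · exact hy h1.symm
  · have hu := normF W hpu
    have hv := normFrev W hpv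
    rw [← Walk.support_reverse] at hv
    have hnadj' : ¬ (lexProd G (⊤ : SimpleGraph (Fin n))).Adj y' x' := fun a => hnadj a.symm
    have hlen' : 2 ≤ W.reverse.length := by rw [Walk.length_reverse]; exact hlen
    by_cases hx1 : x'.1 = g
    · have := fiber W hlen hnadj hne hu (g, h) hgW hx1.symm
      exact hx this.symm
    by_cases hy1 : y'.1 = g
    · have hgWr : (g, h) ∈ W.reverse.support := by
        rw [Walk.support_reverse, List.mem_reverse]; exact hgW
      have := fiber W.reverse hlen' hnadj' hne.symm hv (g, h) hgWr hy1.symm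
      exact hy this.symm
    have hQg : g ∈ (projW W).support := fst_mem_projW_support W (g, h) hgW
    have hxy : ¬ G.Adj x'.1 y'.1 := fun a => hnadj (Or.inl a)
    have hxyne : x'.1 ≠ y'.1 := by
      intro e
      rcases eq_or_ne x'.2 y'.2 with e2 | e2
      · exact hne (Prod.ext e e2)
      · exact hnadj (Or.inr ⟨e, by rwa [top_adj]⟩)
    have hQlen : 2 ≤ (projW W).length := len2 hxyne hxy (projW W)
    have hcore1 := core W hlen hnadj hu
    have hcore2 := core W.reverse hlen' hnadj' hv
    rw [projW_reverse, Walk.support_reverse] at hcore2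
    exact hg x'.1 y'.1 hx1 hy1
      ⟨projW W, Or.inr (Or.inr ⟨hxy, hxyne, hQlen, normB _ hQlen hcore1, normBrev _ hQlen hcore2⟩),
        hQg⟩

end TopFiber

section Assembly

variable {V : Type*}

lemma ext_mem_tollset {G : SimpleGraph V} {s : V} (hs : s ∈ extremeVertices G)
    {T : Set V} (hT : IsTollSet G T) : s ∈ T := by
  obtain ⟨u, hu, v, hv, hmem⟩ := hT s
  rcases eq_or_ne u s with rfl | hus
  · exact hu
  rcases eq_or_ne v s with rfl | hvs
  · exact hv
  exact absurd hmem (hs u v hus hvs)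

lemma self_mem_tollInterval (G : SimpleGraph V) (x : V) : x ∈ tollInterval G x x :=
  ⟨Walk.nil, Or.inl ⟨rfl, rfl⟩, by simp⟩

lemma isTollSet_univ (G : SimpleGraph V) : IsTollSet G Set.univ :=
  fun x => ⟨x, trivial, x, trivial, self_mem_tollInterval G x⟩

lemma tollNumber_set_nonempty [Fintype V] (G : SimpleGraph V) :
    {n | ∃ S : Set V, S.Finite ∧ S.ncard = n ∧ IsTollSet G S}.Nonempty :=
  ⟨_, Set.univ, Set.finite_univ, rfl, isTollSet_univ G⟩

lemma tollNumber_spec [Fintype V] (G : SimpleGraph V) :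
    ∃ S : Set V, S.Finite ∧ S.ncard = tollNumber G ∧ IsTollSet G S :=
  Nat.sInf_mem (tollNumber_set_nonempty G)

lemma tollNumber_le (G : SimpleGraph V) {S : Set V} (h1 : S.Finite) (h3 : IsTollSet G S) :
    tollNumber G ≤ S.ncard :=
  Nat.sInf_le ⟨S, h1, rfl, h3⟩

lemma ncard_prod {α β : Type*} (s : Set α) (t : Set β) :
    (s ×ˢ t).ncard = s.ncard * t.ncard := by
  show Nat.card _ = Nat.card _ * Nat.card _
  rw [Nat.card_congr (Equiv.Set.prod s t), Nat.card_prod]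

def liftHom {n : ℕ} (G : SimpleGraph V) (j : Fin n) :
    G →g lexProd G (⊤ : SimpleGraph (Fin n)) where
  toFun := fun v => (v, j)
  map_rel' := fun h => Or.inl h

lemma tolled_map {n : ℕ} {G : SimpleGraph V} {u v : V} (W : G.Walk u v)
    (hW : IsTolledWalk G W) (j : Fin n) :
    IsTolledWalk (lexProd G (⊤ : SimpleGraph (Fin n))) (W.map (liftHom G j)) := by
  rcases hW with ⟨he, hl⟩ | ⟨hadj, hsup⟩ | ⟨hnadj, hne, hl, hA, hB⟩
  · exact Or.inl ⟨by rw [he], by rw [Walk.length_map]; exact hl⟩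
  · refine Or.inr (Or.inl ⟨Or.inl hadj, ?_⟩)
    rw [Walk.support_map, hsup]
    rfl
  · have hlm : (W.map (liftHom G j)).length = W.length := by rw [Walk.length_map]
    refine Or.inr (Or.inr ⟨?_, ?_, ?_, ?_, ?_⟩)
    · rintro (a | ⟨e, _⟩)
      · exact hnadj a
      · exact hne e
    · intro e
      exact hne (congrArg Prod.fst e)
    · rw [hlm]; exact hl
    · intro i h0 hi
      rw [hlm] at hi
      have hb : i < (W.map (liftHom G j)).support.length := by
        rw [Walk.length_support, hlm]; omega
      have hb2 : i < W.support.length := by rw [Walk.length_support]; omega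
      have h1 := hA i h0 hi
      rw [List.getD_eq_getElem _ _ hb2] at h1
      rw [List.getD_eq_getElem _ _ hb]
      have hg : (W.map (liftHom G j)).support[i]'hb = (W.support[i]'hb2, j) := by
        simp only [Walk.support_map]
        rw [List.getElem_map]
        rfl
      rw [hg]
      constructor
      · rintro (a | ⟨_, t⟩)
        · exact h1.mp a
        · rw [top_adj] at t
          exact absurd rfl t
      · intro e
        exact Or.inl (h1.mpr e)
    · intro i h0 hi
      rw [hlm] at hi
      have hb : i < (W.map (liftHom G j)).support.length := by
        rw [Walk.length_support, hlm]; omega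
      have hb2 : i < W.support.length := by rw [Walk.length_support]; omega
      have h1 := hB i h0 hi
      rw [List.getD_eq_getElem _ _ hb2] at h1
      rw [List.getD_eq_getElem _ _ hb, hlm]
      have hg : (W.map (liftHom G j)).support[i]'hb = (W.support[i]'hb2, j) := by
        simp only [Walk.support_map]
        rw [List.getElem_map]
        rfl
      rw [hg]
      constructor
      · rintro (a | ⟨_, t⟩)
        · exact h1.mp a
        · rw [top_adj] at t
          exact absurd rfl t
      · intro e
        exact Or.inl (h1.mpr e)

lemma isTollSet_prod {n : ℕ} {G : SimpleGraph V} {S : Set V} (hS : IsTollSet G S) :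
    IsTollSet (lexProd G (⊤ : SimpleGraph (Fin n))) (S ×ˢ (Set.univ : Set (Fin n))) := by
  rintro ⟨x, j⟩
  obtain ⟨u, hu, v, hv, W, hW, hxW⟩ := hS x
  refine ⟨(u, j), ⟨hu, trivial⟩, (v, j), ⟨hv, trivial⟩,
    W.map (liftHom G j), tolled_map W hW j, ?_⟩
  have hm := List.mem_map_of_mem (f := liftHom G j) hxW
  rw [← Walk.support_map] at hm
  exact hm

end Assembly

theorem stmt9 {V : Type*} [Fintype V] [Nontrivial V] (G : SimpleGraph V)
    (hext : (extremeVertices G).ncard = tollNumber G) (n : ℕ) :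
    tollNumber (lexProd G (⊤ : SimpleGraph (Fin n))) = n * tollNumber G := by
  classical
  obtain ⟨S, hSfin, hScard, hStoll⟩ := tollNumber_spec G
  have hub : tollNumber (lexProd G (⊤ : SimpleGraph (Fin n))) ≤ n * tollNumber G := by
    have := tollNumber_le (lexProd G (⊤ : SimpleGraph (Fin n)))
      (hSfin.prod Set.finite_univ) (isTollSet_prod (n := n) hStoll)
    rwa [ncard_prod, hScard, Set.ncard_univ, Nat.card_eq_fintype_card, Fintype.card_fin,
      mul_comm] at this
  obtain ⟨T, hTfin, hTcard, hTtoll⟩ := tollNumber_spec (lexProd G (⊤ : SimpleGraph (Fin n)))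
  have hsub : (extremeVertices G) ×ˢ (Set.univ : Set (Fin n)) ⊆ T := by
    rintro ⟨g, j⟩ ⟨hgext, -⟩
    exact ext_mem_tollset (extreme_lift hgext j) hTtoll
  have hlb : n * tollNumber G ≤ tollNumber (lexProd G (⊤ : SimpleGraph (Fin n))) := by
    calc n * tollNumber G
        = ((extremeVertices G) ×ˢ (Set.univ : Set (Fin n))).ncard := by
          rw [ncard_prod, hext, Set.ncard_univ, Nat.card_eq_fintype_card, Fintype.card_fin,
            mul_comm]
      _ ≤ T.ncard := Set.ncard_le_ncard hsub hTfin
      _ = tollNumber (lexProd G (⊤ : SimpleGraph (Fin n))) := hTcard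
  exact le_antisymm hub hlb
end

section
/- Let G and H be connected non-trivial graphs with H not complete. If tn(G ∘ H) = 3 · tn(G), then for every minimum toll set D of G and any two distinct u, v ∈ D, N_G(u) ∩ N_G(v) = ∅. -/
open SimpleGraph

theorem stmt14 {V W : Type*} [Fintype V] [Fintype W] [Nontrivial V] [Nontrivial W]
    (G : SimpleGraph V) (H : SimpleGraph W)
    (hGc : G.Connected) (hHc : H.Connected) (hH : H ≠ ⊤)
    (heq : tollNumber (lexProd G H) = 3 * tollNumber G) :
    ∀ D : Set V, IsTollSet G D → D.ncard = tollNumber G →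
      ∀ u ∈ D, ∀ v ∈ D, u ≠ v → G.neighborSet u ∩ G.neighborSet v = ∅ := by
  classical
  intro D hD hDcard u hu v hv huv
  by_contra hne
  obtain ⟨w, hw⟩ := Set.nonempty_iff_ne_empty.mpr hne
  have hwu : G.Adj u w := hw.1
  have hwv : G.Adj v w := hw.2
  -- a nonadjacent pair in H
  have hpair : ∃ p q : W, p ≠ q ∧ ¬ H.Adj p q := by
    by_contra hc
    push_neg at hc
    apply hH
    ext p q
    simp only [top_adj]
    exact ⟨fun hadj => hadj.ne, fun hne' => hc p q hne'⟩
  obtain ⟨h1, h2, h12, hs12⟩ := hpair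
  -- every vertex has a neighbor
  have hnb : ∀ g : V, ∃ z, G.Adj g z := by
    intro g
    obtain ⟨g', hg'⟩ := exists_ne g
    obtain ⟨p⟩ := hGc.preconnected g g'
    cases p with
    | nil => exact absurd rfl hg'
    | cons hadj q => exact ⟨_, hadj⟩
  choose nb hnbspec using hnb
  set m : V → V := fun g => if g = u ∨ g = v then w else nb g with hm
  have hmu : m u = w := by simp [hm]
  have hmv : m v = w := by simp [hm]
  have hmadj : ∀ g : V, G.Adj g (m g) := by
    intro g
    by_cases hg : g = u ∨ g = v
    · rw [hm]
      simp only [if_pos hg]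
      rcases hg with rfl | rfl
      · exact hwu
      · exact hwv
    · rw [hm]
      simp only [if_neg hg]
      exact hnbspec g
  set M : Set V := m '' D with hM
  set S : Set (V × W) :=
    ((fun a => (a, h1)) '' D) ∪ ((fun a => (a, h1)) '' M) ∪ ((fun a => (a, h2)) '' M) with hS
  have hSts : IsTollSet (lexProd G H) S := by
    rintro ⟨x, y⟩
    by_cases hxD : x ∈ D
    · -- the fiber of x ∈ D is covered by the pair in the fiber of m x
      have adj1 : (lexProd G H).Adj (m x, h1) (x, y) := Or.inl (hmadj x).symm
      have adj2 : (lexProd G H).Adj (x, y) (m x, h2) := Or.inl (hmadj x)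
      refine ⟨(m x, h1),
              Set.mem_union_left _ (Set.mem_union_right _ ⟨m x, ⟨x, hxD, rfl⟩, rfl⟩),
              (m x, h2),
              Set.mem_union_right _ ⟨m x, ⟨x, hxD, rfl⟩, rfl⟩,
              Walk.cons adj1 (Walk.cons adj2 Walk.nil), ?_, ?_⟩
      · unfold IsTolledWalk
        refine Or.inr (Or.inr ⟨?_, ?_, ?_, ?_, ?_⟩)
        · rintro (hg | ⟨-, hh⟩)
          · exact G.loopless.irrefl _ hg
          · exact hs12 hh
        · intro hEq
          exact h12 (congrArg Prod.snd hEq)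
        · simp
        · intro i hi0 hilen
          simp only [Walk.length_cons, Walk.length_nil] at hilen
          have hi1 : i = 1 := by omega
          subst hi1
          have hsup : (Walk.cons adj1 (Walk.cons adj2 Walk.nil)).support
              = [(m x, h1), (x, y), (m x, h2)] := by simp
          rw [hsup]
          simp only [List.getD_cons_succ, List.getD_cons_zero]
          simpa using adj1
        · intro i hi0 hilen
          simp only [Walk.length_cons, Walk.length_nil] at hilen
          have hi1 : i = 1 := by omega
          subst hi1
          have hsup : (Walk.cons adj1 (Walk.cons adj2 Walk.nil)).support
              = [(m x, h1), (x, y), (m x, h2)] := by simp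
          rw [hsup]
          simp only [List.getD_cons_succ, List.getD_cons_zero]
          have : (Walk.cons adj1 (Walk.cons adj2 Walk.nil)).length = 2 := by simp
          rw [this]
          simpa using adj2.symm
      · simp
    · -- x ∉ D : lift a tolled walk of G
      obtain ⟨a, ha, b, hb, hxint⟩ := hD x
      obtain ⟨P, hP, hxP⟩ := hxint
      have hax : a ≠ x := fun hh => hxD (hh ▸ ha)
      have hbx : b ≠ x := fun hh => hxD (hh ▸ hb)
      unfold IsTolledWalk at hP
      rcases hP with ⟨hab, hlen0⟩ | ⟨hadj, hsup⟩ | ⟨hnadj, hne, hlen, hca, hcb⟩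
      · exfalso
        subst hab
        cases P with
        | nil =>
          simp only [Walk.support_nil, List.mem_singleton] at hxP
          exact hxD (hxP ▸ ha)
        | cons h q => simp at hlen0
      · exfalso
        rw [hsup] at hxP
        simp only [List.mem_cons, List.mem_singleton, List.not_mem_nil, or_false] at hxP
        rcases hxP with rfl | rfl
        · exact hxD ha
        · exact hxD hb
      · set c : V → W := fun z => if z = x then y else h1 with hc
        have hcx : c x = y := by simp [hc]
        have hca' : c a = h1 := by simp [hc, hax]
        have hcb' : c b = h1 := by simp [hc, hbx]
        set φ : G →g lexProd G H := ⟨fun z => (z, c z), fun hzz => Or.inl hzz⟩ with hφ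
        have hφapp : ∀ z : V, φ z = (z, c z) := fun z => rfl
        have hkey : ∀ i, i < P.support.length →
            (P.map φ).support.getD i (a, c a)
              = (P.support.getD i a, c (P.support.getD i a)) := by
          intro i hi
          rw [Walk.support_map,
              List.getD_eq_getElem _ _ (by simpa using hi),
              List.getElem_map,
              List.getD_eq_getElem _ _ hi]
          exact hφapp _
        have hlenQ : (P.map φ).length = P.length := Walk.length_map _ _
        refine ⟨(a, c a),
                Set.mem_union_left _ (Set.mem_union_left _ ⟨a, ha, by rw [hca']⟩),
                (b, c b),
                Set.mem_union_left _ (Set.mem_union_left _ ⟨b, hb, by rw [hcb']⟩),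
                P.map φ, ?_, ?_⟩
        · unfold IsTolledWalk
          refine Or.inr (Or.inr ⟨?_, ?_, ?_, ?_, ?_⟩)
          · rintro (hg | ⟨hfst, -⟩)
            · exact hnadj hg
            · exact hne hfst
          · intro hEq
            exact hne (congrArg Prod.fst hEq)
          · rw [hlenQ]; exact hlen
          · intro i hi0 hilen
            rw [hlenQ] at hilen
            rw [hkey i (by rw [Walk.length_support]; omega)]
            have hGa := hca i hi0 hilen
            generalize hz : P.support.getD i a = z at hGa ⊢
            constructor
            · rintro (hg | ⟨hfst, hH'⟩)
              · exact hGa.mp hg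
              · exfalso
                have haz : a = z := hfst
                subst haz
                exact H.loopless.irrefl _ hH'
            · intro hi1
              exact Or.inl (hGa.mpr hi1)
          · intro i hi0 hilen
            rw [hlenQ] at hilen
            rw [hkey i (by rw [Walk.length_support]; omega), hlenQ]
            have hGb := hcb i hi0 hilen
            generalize hz : P.support.getD i a = z at hGb ⊢
            constructor
            · rintro (hg | ⟨hfst, hH'⟩)
              · exact hGb.mp hg
              · exfalso
                have hbz : b = z := hfst
                subst hbz
                exact H.loopless.irrefl _ hH'
            · intro hi1
              exact Or.inl (hGb.mpr hi1)
        · rw [Walk.support_map]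
          refine List.mem_map.mpr ⟨x, hxP, ?_⟩
          rw [hφapp x, hcx]
  -- cardinality estimates
  have hlex_le : tollNumber (lexProd G H) ≤ S.ncard :=
    Nat.sInf_le ⟨S, Set.toFinite S, rfl, hSts⟩
  have hA : ((fun a : V => (a, h1)) '' D).ncard ≤ D.ncard :=
    Set.ncard_image_le (Set.toFinite D)
  have hB : ((fun a : V => (a, h1)) '' M).ncard ≤ M.ncard :=
    Set.ncard_image_le (Set.toFinite M)
  have hC : ((fun a : V => (a, h2)) '' M).ncard ≤ M.ncard :=
    Set.ncard_image_le (Set.toFinite M)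
  have hScard : S.ncard ≤ D.ncard + M.ncard + M.ncard := by
    rw [hS]
    refine le_trans (Set.ncard_union_le _ _) ?_
    exact add_le_add (le_trans (Set.ncard_union_le _ _) (add_le_add hA hB)) hC
  have hMD : M = m '' (D \ {v}) := by
    apply Set.Subset.antisymm
    · rintro _ ⟨g, hg, rfl⟩
      by_cases hgv : g = v
      · subst hgv
        exact ⟨u, ⟨hu, by simpa using huv⟩, by rw [hmu, hmv]⟩
      · exact ⟨g, ⟨hg, by simpa using hgv⟩, rfl⟩
    · rintro _ ⟨g, ⟨hg, -⟩, rfl⟩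
      exact ⟨g, hg, rfl⟩
  have hMcard : M.ncard ≤ D.ncard - 1 := by
    rw [hMD]
    refine le_trans (Set.ncard_image_le (Set.toFinite _)) ?_
    rw [Set.ncard_diff_singleton_of_mem hv]
  have hDpos : 0 < D.ncard := (Set.ncard_pos (Set.toFinite D)).mpr ⟨u, hu⟩
  omega
end
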